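/- Let g be 2π-periodic and α-Hölder (α ∈ (0,1)), and ω as above. Then for r > 1 and any two points x₁ = re^{iφ₁}, x₂ = re^{iφ₂} on the same circle, |ω(x₁) - ω(x₂)| ≤ C r² [g]_{0,α} (r-1)^{α-1} |x₁ - x₂|, with C depending only on α. -/

import Mathlib

open Real

section Aux
open intervalIntegral MeasureTheory


noncomputable def Kker (r τ : ℝ) : ℝ := r * Real.sin τ / (r ^ 2 + 1 - 2 * r * Real.cos τ)

noncomputable def Kker' (r τ : ℝ) : ℝ :=
  r * ((r ^ 2 + 1) * Real.cos τ - 2 * r) / (r ^ 2 + 1 - 2 * r * Real.cos τ) ^ 2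

lemma denom_ge {r : ℝ} (hr : 1 < r) (τ : ℝ) :
    (r - 1) ^ 2 + 2 * r * (1 - Real.cos τ) ≤ r ^ 2 + 1 - 2 * r * Real.cos τ := by
  ring_nf; nlinarith []

lemma denom_pos {r : ℝ} (hr : 1 < r) (τ : ℝ) : 0 < r ^ 2 + 1 - 2 * r * Real.cos τ := by
  nlinarith [Real.cos_le_one τ, Real.neg_one_le_cos τ]

lemma hasDerivAt_Kker {r : ℝ} (hr : 1 < r) (τ : ℝ) :
    HasDerivAt (Kker r) (Kker' r τ) τ := by
  have hd := (denom_pos hr τ).ne'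
  have h1 : HasDerivAt (fun τ => r * Real.sin τ) (r * Real.cos τ) τ :=
    (Real.hasDerivAt_sin τ).const_mul r
  have h2 : HasDerivAt (fun τ => r ^ 2 + 1 - 2 * r * Real.cos τ)
      (2 * r * Real.sin τ) τ := by
    have := ((Real.hasDerivAt_cos τ).const_mul (2 * r)).const_sub (r ^ 2 + 1)
    exact this.congr_deriv (by ring)
  have := h1.div h2 hd
  refine this.congr_deriv ?_
  unfold Kker'
  have hpy := Real.sin_sq_add_cos_sq τ
  congr 1
  linear_combination (-2) * r ^ 2 * hpy
lemma Kker'_le_inv_denom {r : ℝ} (hr : 1 < r) (τ : ℝ) :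
    |Kker' r τ| ≤ r ^ 2 / (r ^ 2 + 1 - 2 * r * Real.cos τ) := by
  have hD := denom_pos hr τ
  set D := r ^ 2 + 1 - 2 * r * Real.cos τ with hDdef
  have hnum : |r * ((r ^ 2 + 1) * Real.cos τ - 2 * r)| ≤ r ^ 2 * D := by
    rw [abs_mul, abs_of_nonneg (by linarith : (0:ℝ) ≤ r)]
    have h1 : |(r ^ 2 + 1) * Real.cos τ - 2 * r| ≤ (r ^ 2 + 1) * (1 - Real.cos τ) + (r - 1) ^ 2 := by
      rw [abs_le]
      constructor <;> nlinarith [Real.cos_le_one τ]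
    have h2 : (r ^ 2 + 1) * (1 - Real.cos τ) + (r - 1) ^ 2 ≤ r * D := by
      have hc := Real.cos_le_one τ
      nlinarith
    calc r * |(r ^ 2 + 1) * Real.cos τ - 2 * r| ≤ r * (r * D) := by
          apply mul_le_mul_of_nonneg_left (le_trans h1 h2) (by linarith)
      _ = r ^ 2 * D := by ring
  rw [Kker', abs_div, abs_of_nonneg (by positivity : (0:ℝ) ≤ D ^ 2)]
  rw [div_le_div_iff₀ (by positivity) hD]
  calc |r * ((r ^ 2 + 1) * Real.cos τ - 2 * r)| * D ≤ r ^ 2 * D * D :=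
        mul_le_mul_of_nonneg_right hnum hD.le
    _ = r ^ 2 * D ^ 2 := by ring

lemma one_sub_cos_ge {τ : ℝ} (h : |τ| ≤ π) : 2 * τ ^ 2 / π ^ 2 ≤ 1 - Real.cos τ := by
  have hπ := Real.pi_pos
  have hcos : 1 - Real.cos τ = 2 * Real.sin (τ / 2) ^ 2 := by
    have h1 := Real.cos_two_mul (τ / 2)
    have h2 := Real.sin_sq_add_cos_sq (τ / 2)
    rw [show 2 * (τ / 2) = τ by ring] at h1
    nlinarith
  have hs2 : Real.sin (|τ| / 2) ^ 2 = Real.sin (τ / 2) ^ 2 := by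
    rcases abs_cases τ with ⟨h1, _⟩ | ⟨h1, _⟩ <;> rw [h1]
    · rw [neg_div, Real.sin_neg]; ring
  have hge : |τ| / π ≤ Real.sin (|τ| / 2) := by
    have := Real.mul_le_sin (x := |τ| / 2) (by positivity) (by linarith [abs_nonneg τ])
    calc |τ| / π = 2 / π * (|τ| / 2) := by field_simp
      _ ≤ _ := this
  have hsq : (|τ| / π) ^ 2 ≤ Real.sin (|τ| / 2) ^ 2 := by
    have h0 : (0:ℝ) ≤ |τ| / π := by positivity
    nlinarith
  rw [hcos]
  rw [hs2] at hsq
  calc 2 * τ ^ 2 / π ^ 2 = 2 * (|τ| / π) ^ 2 := by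
        rw [div_pow, sq_abs]; ring
    _ ≤ 2 * Real.sin (τ / 2) ^ 2 := by linarith

lemma Kker'_bound {r : ℝ} (hr : 1 < r) {τ : ℝ} (h : |τ| ≤ π) :
    |Kker' r τ| ≤ r ^ 2 / ((r - 1) ^ 2 + 4 * r / π ^ 2 * τ ^ 2) := by
  have hπ := Real.pi_pos
  refine (Kker'_le_inv_denom hr τ).trans ?_
  have hq : (0:ℝ) < (r - 1) ^ 2 + 4 * r / π ^ 2 * τ ^ 2 := by
    have : (0:ℝ) < (r-1)^2 := pow_pos (by linarith) 2
    have : (0:ℝ) ≤ 4 * r / π ^ 2 * τ ^ 2 := by positivity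
    linarith
  apply div_le_div_of_nonneg_left (by positivity) hq
  have h1 := one_sub_cos_ge h
  have key : 4 * r / π ^ 2 * τ ^ 2 ≤ 2 * r * (1 - Real.cos τ) := by
    have h2 : 2 * r * (2 * τ ^ 2 / π ^ 2) ≤ 2 * r * (1 - Real.cos τ) :=
      mul_le_mul_of_nonneg_left h1 (by linarith)
    calc 4 * r / π ^ 2 * τ ^ 2 = 2 * r * (2 * τ ^ 2 / π ^ 2) := by
          field_simp; ring
      _ ≤ _ := h2
  nlinarith [key]


lemma cont_Jf {α b : ℝ} (hα : 0 < α) (hb : 0 ≤ b) {ε : ℝ} (hε : 0 < ε) :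
    Continuous fun t : ℝ => |t| ^ α / (ε ^ 2 + b * t ^ 2) := by
  apply Continuous.div
  · exact continuous_abs.rpow_const fun x => Or.inr hα.le
  · continuity
  · intro t
    have : 0 ≤ b * t ^ 2 := by positivity
    positivity

lemma Jcore {α : ℝ} (hα : α ∈ Set.Ioo (0:ℝ) 1) {r : ℝ} (hr : 1 < r) :
    ∫ t in (0:ℝ)..π, |t| ^ α / ((r - 1) ^ 2 + 4 * r / π ^ 2 * t ^ 2)
      ≤ (1 / (1 + α) + π ^ 2 / (4 * (1 - α))) * (r - 1) ^ (α - 1) := by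
  obtain ⟨hα0, hα1⟩ := hα
  have hπ := Real.pi_pos
  set ε := r - 1 with hεdef
  have hε : 0 < ε := by simp [hεdef]; linarith
  set b := 4 * r / π ^ 2 with hbdef
  have hb : 0 < b := by positivity
  have hbge : π ^ 2 / (4 * r) ≤ π ^ 2 / 4 := by
    apply div_le_div_of_nonneg_left (by positivity) (by norm_num) (by linarith)
  have hcont : Continuous fun t : ℝ => |t| ^ α / (ε ^ 2 + b * t ^ 2) :=
    cont_Jf hα0 hb.le hε
  have hεa : (0:ℝ) < ε ^ (α - 1) := Real.rpow_pos_of_pos hε _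
  -- the "small t" bound: on [0, c] with c ≤ ε ∨ anything, f t ≤ t ^ α / ε ^ 2
  have hsmall : ∀ c : ℝ, 0 ≤ c →
      (∫ t in (0:ℝ)..c, |t| ^ α / (ε ^ 2 + b * t ^ 2)) ≤ c ^ (α + 1) / (α + 1) / ε ^ 2 := by
    intro c hc
    have h1 : (∫ t in (0:ℝ)..c, |t| ^ α / (ε ^ 2 + b * t ^ 2))
        ≤ ∫ t in (0:ℝ)..c, t ^ α / ε ^ 2 := by
      apply intervalIntegral.integral_mono_on hc
      · exact hcont.intervalIntegrable _ _
      · apply IntervalIntegrable.div_const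
        exact intervalIntegrable_rpow' (by linarith)
      · intro t ht
        rw [abs_of_nonneg ht.1]
        apply div_le_div_of_nonneg_left (Real.rpow_nonneg ht.1 _) (by positivity)
        nlinarith [sq_nonneg t]
    have h2 : (∫ t in (0:ℝ)..c, t ^ α / ε ^ 2) = c ^ (α + 1) / (α + 1) / ε ^ 2 := by
      rw [intervalIntegral.integral_div, integral_rpow (Or.inl (by linarith))]
      rw [Real.zero_rpow (by linarith)]
      ring_nf
    linarith [h1, h2.le, h2.ge]
  rcases le_or_gt π ε with hcase | hcase
  · -- ε ≥ π
    have h1 := hsmall π hπ.le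
    have h2 : π ^ (α + 1) ≤ ε ^ (α + 1) := Real.rpow_le_rpow hπ.le hcase (by linarith)
    have h3 : ε ^ (α + 1) / (α + 1) / ε ^ 2 = ε ^ (α - 1) / (α + 1) := by
      rw [div_div, div_mul_eq_div_div_swap, ← Real.rpow_natCast ε 2,
        ← Real.rpow_sub hε]
      norm_num
      rw [show α + 1 - 2 = α - 1 by ring]
    have h4 : π ^ (α + 1) / (α + 1) / ε ^ 2 ≤ ε ^ (α - 1) / (α + 1) := by
      rw [← h3]
      apply div_le_div_of_nonneg_right _ (by positivity)
      · exact div_le_div_of_nonneg_right h2 (by linarith)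
    have h5 : ε ^ (α - 1) / (α + 1) ≤ (1 / (1 + α) + π ^ 2 / (4 * (1 - α))) * ε ^ (α - 1) := by
      have hpos : (0:ℝ) < π ^ 2 / (4 * (1 - α)) := div_pos (by positivity) (by linarith)
      rw [div_eq_mul_one_div, mul_comm]
      apply mul_le_mul_of_nonneg_right _ hεa.le
      rw [add_comm (1:ℝ) α]
      linarith
    linarith
  · -- ε < π : split at ε
    have hint1 : IntervalIntegrable (fun t => |t| ^ α / (ε ^ 2 + b * t ^ 2)) volume 0 ε :=
      hcont.intervalIntegrable _ _
    have hint2 : IntervalIntegrable (fun t => |t| ^ α / (ε ^ 2 + b * t ^ 2)) volume ε π :=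
      hcont.intervalIntegrable _ _
    rw [← intervalIntegral.integral_add_adjacent_intervals hint1 hint2]
    have hA : (∫ t in (0:ℝ)..ε, |t| ^ α / (ε ^ 2 + b * t ^ 2)) ≤ ε ^ (α - 1) / (α + 1) := by
      have h1 := hsmall ε hε.le
      have h3 : ε ^ (α + 1) / (α + 1) / ε ^ 2 = ε ^ (α - 1) / (α + 1) := by
        rw [div_div, div_mul_eq_div_div_swap, ← Real.rpow_natCast ε 2,
          ← Real.rpow_sub hε]
        norm_num
        rw [show α + 1 - 2 = α - 1 by ring]
      linarith
    have hB : (∫ t in ε..π, |t| ^ α / (ε ^ 2 + b * t ^ 2))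
        ≤ π ^ 2 / 4 * (ε ^ (α - 1) / (1 - α)) := by
      have h1 : (∫ t in ε..π, |t| ^ α / (ε ^ 2 + b * t ^ 2))
          ≤ ∫ t in ε..π, t ^ (α - 2) * (π ^ 2 / (4 * r)) := by
        apply intervalIntegral.integral_mono_on hcase.le
        · exact hint2
        · apply IntervalIntegrable.mul_const
          apply intervalIntegrable_rpow
          right
          rw [Set.mem_uIcc]
          push_neg
          constructor <;> intro h <;> linarith
        · intro t ht
          have ht0 : 0 < t := lt_of_lt_of_le hε ht.1
          rw [abs_of_nonneg ht0.le]
          have hd : b * t ^ 2 ≤ ε ^ 2 + b * t ^ 2 := by nlinarith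
          have : t ^ α / (ε ^ 2 + b * t ^ 2) ≤ t ^ α / (b * t ^ 2) := by
            apply div_le_div_of_nonneg_left (Real.rpow_nonneg ht0.le _) (by positivity) hd
          refine this.trans (le_of_eq ?_)
          rw [hbdef]
          rw [show t ^ α / (4 * r / π ^ 2 * t ^ 2) = t ^ α / t ^ 2 * (π ^ 2 / (4 * r)) by
            field_simp]
          rw [← Real.rpow_natCast t 2, ← Real.rpow_sub ht0]
          norm_num
        -- end mono
      have h2 : (∫ t in ε..π, t ^ (α - 2) * (π ^ 2 / (4 * r)))
          = (π ^ (α - 1) - ε ^ (α - 1)) / (α - 1) * (π ^ 2 / (4 * r)) := by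
        rw [intervalIntegral.integral_mul_const, integral_rpow]
        · rw [show α - 2 + 1 = α - 1 by ring]
        · right
          constructor
          · intro h; linarith
          · rw [Set.mem_uIcc]; push_neg
            constructor <;> intro h <;> linarith
      have h3 : (π ^ (α - 1) - ε ^ (α - 1)) / (α - 1) ≤ ε ^ (α - 1) / (1 - α) := by
        have hπa : (0:ℝ) < π ^ (α - 1) := Real.rpow_pos_of_pos hπ _
        rw [show (π ^ (α - 1) - ε ^ (α - 1)) / (α - 1)
            = (ε ^ (α - 1) - π ^ (α - 1)) / (1 - α) by
          rw [div_eq_div_iff (by linarith : α - 1 < 0).ne (by linarith : (0:ℝ) < 1 - α).ne']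
          ring]
        apply div_le_div_of_nonneg_right (by linarith) (by linarith)
      have h4 : (π ^ (α - 1) - ε ^ (α - 1)) / (α - 1) * (π ^ 2 / (4 * r))
          ≤ ε ^ (α - 1) / (1 - α) * (π ^ 2 / 4) := by
        apply mul_le_mul h3 hbge (by positivity) (le_of_lt (div_pos hεa (by linarith)))
      calc (∫ t in ε..π, |t| ^ α / (ε ^ 2 + b * t ^ 2))
          ≤ (π ^ (α - 1) - ε ^ (α - 1)) / (α - 1) * (π ^ 2 / (4 * r)) := by
            rw [← h2]; exact h1
        _ ≤ ε ^ (α - 1) / (1 - α) * (π ^ 2 / 4) := h4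
        _ = π ^ 2 / 4 * (ε ^ (α - 1) / (1 - α)) := by ring
    have hfinal : (1 / (1 + α) + π ^ 2 / (4 * (1 - α))) * ε ^ (α - 1)
        = ε ^ (α - 1) / (α + 1) + π ^ 2 / 4 * (ε ^ (α - 1) / (1 - α)) := by
      field_simp
      ring
    linarith

lemma Jfull {α : ℝ} (hα : α ∈ Set.Ioo (0:ℝ) 1) {r : ℝ} (hr : 1 < r) :
    ∫ t in (-π)..π, |t| ^ α / ((r - 1) ^ 2 + 4 * r / π ^ 2 * t ^ 2)
      ≤ 2 * (1 / (1 + α) + π ^ 2 / (4 * (1 - α))) * (r - 1) ^ (α - 1) := by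
  have hπ := Real.pi_pos
  have hε : (0:ℝ) < r - 1 := by linarith
  have hb : (0:ℝ) ≤ 4 * r / π ^ 2 := by positivity
  have hcont : Continuous fun t : ℝ => |t| ^ α / ((r - 1) ^ 2 + 4 * r / π ^ 2 * t ^ 2) :=
    cont_Jf hα.1 hb hε
  have hsplit : (∫ t in (-π)..π, |t| ^ α / ((r - 1) ^ 2 + 4 * r / π ^ 2 * t ^ 2))
      = (∫ t in (-π)..(0:ℝ), |t| ^ α / ((r - 1) ^ 2 + 4 * r / π ^ 2 * t ^ 2))
        + ∫ t in (0:ℝ)..π, |t| ^ α / ((r - 1) ^ 2 + 4 * r / π ^ 2 * t ^ 2) :=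
    (intervalIntegral.integral_add_adjacent_intervals (hcont.intervalIntegrable _ _)
      (hcont.intervalIntegrable _ _)).symm
  have hrefl : (∫ t in (-π)..(0:ℝ), |t| ^ α / ((r - 1) ^ 2 + 4 * r / π ^ 2 * t ^ 2))
      = ∫ t in (0:ℝ)..π, |t| ^ α / ((r - 1) ^ 2 + 4 * r / π ^ 2 * t ^ 2) := by
    have h2 := intervalIntegral.integral_comp_neg
      (a := (0:ℝ)) (b := π) (f := fun t => |t| ^ α / ((r - 1) ^ 2 + 4 * r / π ^ 2 * t ^ 2))
    rw [neg_zero] at h2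
    rw [← h2]
    apply intervalIntegral.integral_congr
    intro x _
    simp only [abs_neg, neg_sq]
  have hcore := Jcore hα hr
  rw [hsplit, hrefl]
  linarith
lemma cont_Kker {r : ℝ} (hr : 1 < r) : Continuous (Kker r) := by
  apply Continuous.div (by continuity) (by continuity)
  exact fun τ => (denom_pos hr τ).ne'

lemma cont_Kker' {r : ℝ} (hr : 1 < r) : Continuous (Kker' r) := by
  apply Continuous.div (by continuity) (by continuity)
  exact fun τ => pow_ne_zero 2 (denom_pos hr τ).ne'

lemma periodic_Kker (r : ℝ) : Function.Periodic (Kker r) (2 * π) := by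
  intro x; unfold Kker; rw [Real.sin_add_two_pi, Real.cos_add_two_pi]

lemma Kker'_global {r : ℝ} (hr : 1 < r) (τ : ℝ) :
    |Kker' r τ| ≤ r ^ 2 / (r - 1) ^ 2 := by
  refine (Kker'_le_inv_denom hr τ).trans ?_
  apply div_le_div_of_nonneg_left (by positivity) (pow_pos (by linarith) 2)
  nlinarith [Real.cos_le_one τ]

lemma G_rep {g : ℝ → ℝ} (hper : ∀ x, g (x + 2 * π) = g x) {r : ℝ} (φ₀ : ℝ) (φ : ℝ) :
    (∫ τ in (-π)..π, g (τ + φ) * Kker r τ)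
      = ∫ t in (φ₀ - π)..(φ₀ + π), g t * Kker r (t - φ) := by
  have h1 : (∫ τ in (-π)..π, g (τ + φ) * Kker r τ)
      = ∫ τ in (-π)..π, (fun t => g t * Kker r (t - φ)) (τ + φ) := by
    apply intervalIntegral.integral_congr
    intro τ _
    simp [add_sub_cancel_right]
  rw [h1, intervalIntegral.integral_comp_add_right (f := fun t => g t * Kker r (t - φ)) φ]
  have hper' : Function.Periodic (fun t => g t * Kker r (t - φ)) (2 * π) := by
    intro x
    simp only
    rw [hper x, show x + 2 * π - φ = x - φ + 2 * π by ring, periodic_Kker r (x - φ)]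
  rw [show π + φ = -π + φ + 2 * π by ring, show φ₀ + π = φ₀ - π + 2 * π by ring]
  exact hper'.intervalIntegral_add_eq (-π + φ) (φ₀ - π)

lemma G_hasDeriv {g : ℝ → ℝ} (hper : ∀ x, g (x + 2 * π) = g x) (hgc : Continuous g)
    {r : ℝ} (hr : 1 < r) (φ₀ : ℝ) :
    HasDerivAt (fun φ => ∫ τ in (-π)..π, g (τ + φ) * Kker r τ)
      (∫ t in (φ₀ - π)..(φ₀ + π), -(g t * Kker' r (t - φ₀))) φ₀ := by
  have hGH : (fun φ => ∫ τ in (-π)..π, g (τ + φ) * Kker r τ)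
      = fun φ => ∫ t in (φ₀ - π)..(φ₀ + π), g t * Kker r (t - φ) :=
    funext fun φ => G_rep hper φ₀ φ
  rw [hGH]
  have hcF : ∀ x : ℝ, Continuous fun t => g t * Kker r (t - x) := fun x =>
    hgc.mul ((cont_Kker hr).comp (continuous_id.sub continuous_const))
  have hcF' : ∀ x : ℝ, Continuous fun t => -(g t * Kker' r (t - x)) := fun x =>
    (hgc.mul ((cont_Kker' hr).comp (continuous_id.sub continuous_const))).neg
  have := intervalIntegral.hasDerivAt_integral_of_dominated_loc_of_deriv_le
    (F := fun x t => g t * Kker r (t - x))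
    (F' := fun x t => -(g t * Kker' r (t - x)))
    (x₀ := φ₀) (a := φ₀ - π) (b := φ₀ + π) (μ := volume)
    (bound := fun t => |g t| * (r ^ 2 / (r - 1) ^ 2))
    (Metric.ball_mem_nhds φ₀ one_pos)
    (Filter.Eventually.of_forall fun x => (hcF x).aestronglyMeasurable)
    ((hcF φ₀).intervalIntegrable _ _)
    ((hcF' φ₀).aestronglyMeasurable)
    (Filter.Eventually.of_forall fun t _ => ?_)
    ((hgc.abs.mul continuous_const).intervalIntegrable _ _)
    (Filter.Eventually.of_forall fun t _ => ?_)
  · exact this.2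
  · intro x _
    rw [Real.norm_eq_abs, abs_neg, abs_mul]
    exact mul_le_mul_of_nonneg_left (Kker'_global hr _) (abs_nonneg _)
  · intro x _
    have h1 : HasDerivAt (fun y : ℝ => t - y) (-1) x := by
      simpa using (hasDerivAt_id x).const_sub t
    have h2 := (hasDerivAt_Kker hr (t - x)).comp x h1
    have h3 := h2.const_mul (g t)
    exact h3.congr_deriv (by ring)

lemma deriv_bound {α : ℝ} (hα : α ∈ Set.Ioo (0:ℝ) 1) {g : ℝ → ℝ} {Cg : ℝ}
    (hg : ∀ x y, |g x - g y| ≤ Cg * |x - y| ^ α) (hCg : 0 ≤ Cg) (hgc : Continuous g)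
    {r : ℝ} (hr : 1 < r) (φ₀ : ℝ) :
    |∫ t in (φ₀ - π)..(φ₀ + π), -(g t * Kker' r (t - φ₀))|
      ≤ Cg * r ^ 2 * (2 * (1 / (1 + α) + π ^ 2 / (4 * (1 - α)))) * (r - 1) ^ (α - 1) := by
  have hπ := Real.pi_pos
  have hε : (0:ℝ) < r - 1 := by linarith
  have hb : (0:ℝ) ≤ 4 * r / π ^ 2 := by positivity
  have hcK' : Continuous fun t => Kker' r (t - φ₀) :=
    (cont_Kker' hr).comp (continuous_id.sub continuous_const)
  -- ∫ K' (t - φ₀) = 0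
  have h0 : (∫ t in (φ₀ - π)..(φ₀ + π), Kker' r (t - φ₀)) = 0 := by
    rw [intervalIntegral.integral_comp_sub_right (f := Kker' r) φ₀]
    rw [show φ₀ - π - φ₀ = -π by ring, show φ₀ + π - φ₀ = π by ring]
    rw [intervalIntegral.integral_eq_sub_of_hasDerivAt
      (fun x _ => hasDerivAt_Kker hr x) ((cont_Kker' hr).intervalIntegrable _ _)]
    simp [Kker, Real.sin_pi]
  -- replace g by g - g φ₀
  have heq : (∫ t in (φ₀ - π)..(φ₀ + π), -(g t * Kker' r (t - φ₀)))
      = -(∫ t in (φ₀ - π)..(φ₀ + π), (g t - g φ₀) * Kker' r (t - φ₀)) := by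
    rw [intervalIntegral.integral_neg]
    congr 1
    have hint1 : IntervalIntegrable (fun t => g t * Kker' r (t - φ₀)) volume
        (φ₀ - π) (φ₀ + π) := (hgc.mul hcK').intervalIntegrable _ _
    have hint2 : IntervalIntegrable (fun t => g φ₀ * Kker' r (t - φ₀)) volume
        (φ₀ - π) (φ₀ + π) := (continuous_const.mul hcK').intervalIntegrable _ _
    have : (∫ t in (φ₀ - π)..(φ₀ + π), (g t - g φ₀) * Kker' r (t - φ₀))
        = (∫ t in (φ₀ - π)..(φ₀ + π), g t * Kker' r (t - φ₀))
          - ∫ t in (φ₀ - π)..(φ₀ + π), g φ₀ * Kker' r (t - φ₀) := by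
      rw [← intervalIntegral.integral_sub hint1 hint2]
      apply intervalIntegral.integral_congr
      intro t _
      ring
    rw [this, intervalIntegral.integral_const_mul, h0, mul_zero, sub_zero]
  rw [heq, abs_neg]
  have hab : φ₀ - π ≤ φ₀ + π := by linarith
  have hbnd : ∀ t ∈ Set.Icc (φ₀ - π) (φ₀ + π),
      |(g t - g φ₀) * Kker' r (t - φ₀)|
        ≤ Cg * r ^ 2 * (|t - φ₀| ^ α / ((r - 1) ^ 2 + 4 * r / π ^ 2 * (t - φ₀) ^ 2)) := by
    intro t ht
    have htφ : |t - φ₀| ≤ π := by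
      rw [abs_le]; constructor <;> [linarith [ht.1]; linarith [ht.2]]
    rw [abs_mul]
    calc |g t - g φ₀| * |Kker' r (t - φ₀)|
        ≤ (Cg * |t - φ₀| ^ α) * (r ^ 2 / ((r - 1) ^ 2 + 4 * r / π ^ 2 * (t - φ₀) ^ 2)) := by
          apply mul_le_mul (hg t φ₀) (Kker'_bound hr htφ) (abs_nonneg _)
          positivity
      _ = Cg * r ^ 2 * (|t - φ₀| ^ α / ((r - 1) ^ 2 + 4 * r / π ^ 2 * (t - φ₀) ^ 2)) := by
          ring
  have hcbnd : Continuous fun t =>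
      Cg * r ^ 2 * (|t - φ₀| ^ α / ((r - 1) ^ 2 + 4 * r / π ^ 2 * (t - φ₀) ^ 2)) := by
    apply Continuous.mul continuous_const
    exact (cont_Jf hα.1 hb hε).comp (continuous_id.sub continuous_const)
  calc |∫ t in (φ₀ - π)..(φ₀ + π), (g t - g φ₀) * Kker' r (t - φ₀)|
      ≤ ∫ t in (φ₀ - π)..(φ₀ + π), |(g t - g φ₀) * Kker' r (t - φ₀)| :=
        intervalIntegral.abs_integral_le_integral_abs hab
    _ ≤ ∫ t in (φ₀ - π)..(φ₀ + π),
          Cg * r ^ 2 * (|t - φ₀| ^ α / ((r - 1) ^ 2 + 4 * r / π ^ 2 * (t - φ₀) ^ 2)) := by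
        apply intervalIntegral.integral_mono_on hab
        · exact ((hgc.sub continuous_const).mul hcK').abs.intervalIntegrable _ _
        · exact hcbnd.intervalIntegrable _ _
        · exact hbnd
    _ = Cg * r ^ 2 * ∫ t in (φ₀ - π)..(φ₀ + π),
          |t - φ₀| ^ α / ((r - 1) ^ 2 + 4 * r / π ^ 2 * (t - φ₀) ^ 2) := by
        rw [intervalIntegral.integral_const_mul]
    _ = Cg * r ^ 2 * ∫ u in (-π)..π, |u| ^ α / ((r - 1) ^ 2 + 4 * r / π ^ 2 * u ^ 2) := by
        congr 1
        rw [intervalIntegral.integral_comp_sub_right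
          (f := fun u => |u| ^ α / ((r - 1) ^ 2 + 4 * r / π ^ 2 * u ^ 2)) φ₀]
        rw [show φ₀ - π - φ₀ = -π by ring, show φ₀ + π - φ₀ = π by ring]
    _ ≤ Cg * r ^ 2 * (2 * (1 / (1 + α) + π ^ 2 / (4 * (1 - α))) * (r - 1) ^ (α - 1)) := by
        apply mul_le_mul_of_nonneg_left (Jfull hα hr) (by positivity)
    _ = Cg * r ^ 2 * (2 * (1 / (1 + α) + π ^ 2 / (4 * (1 - α)))) * (r - 1) ^ (α - 1) := by
        ring



lemma holder_cont {g : ℝ → ℝ} {Cg α : ℝ} (hα : 0 < α)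
    (hg : ∀ x y, |g x - g y| ≤ Cg * |x - y| ^ α) : Continuous g := by
  rw [continuous_iff_continuousAt]
  intro x
  rw [ContinuousAt, tendsto_iff_dist_tendsto_zero]
  apply squeeze_zero (fun y => dist_nonneg) (g := fun y => Cg * |y - x| ^ α)
    (fun y => by rw [Real.dist_eq]; exact hg y x)
  have hc : Continuous fun y : ℝ => Cg * |y - x| ^ α :=
    continuous_const.mul
      (((continuous_id.sub continuous_const).abs).rpow_const fun _ => Or.inr hα.le)
  have := hc.tendsto x
  simpa [Real.zero_rpow hα.ne'] using this

lemma holder_Cg_nonneg {g : ℝ → ℝ} {Cg α : ℝ}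
    (hg : ∀ x y, |g x - g y| ≤ Cg * |x - y| ^ α) : 0 ≤ Cg := by
  have h := hg 0 1
  simp only [zero_sub, abs_neg, abs_one, Real.one_rpow, mul_one] at h
  exact le_trans (abs_nonneg _) h

lemma abs_exp_sub_exp_ge {a b : ℝ} (h : |a - b| ≤ π) :
    2 * |a - b| / π ≤ ‖Complex.exp (a * Complex.I) - Complex.exp (b * Complex.I)‖ := by
  have hπ := Real.pi_pos
  set θ := a - b with hθ
  have hfact : Complex.exp (a * Complex.I) - Complex.exp (b * Complex.I)
      = Complex.exp (b * Complex.I) * (Complex.exp (θ * Complex.I) - 1) := by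
    rw [mul_sub, ← Complex.exp_add, mul_one]
    congr 2
    push_cast [hθ]
    ring
  rw [hfact, norm_mul, Complex.norm_exp_ofReal_mul_I, one_mul]
  have hsq : (‖Complex.exp (θ * Complex.I) - 1‖) ^ 2 = 2 - 2 * Real.cos θ := by
    rw [Complex.sq_norm, Complex.normSq_apply]
    rw [Complex.sub_re, Complex.sub_im, Complex.exp_ofReal_mul_I_re, Complex.exp_ofReal_mul_I_im]
    simp only [Complex.one_re, Complex.one_im, sub_zero]
    nlinarith [Real.sin_sq_add_cos_sq θ]
  have hcos := one_sub_cos_ge h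
  have h2 : (2 * |θ| / π) ^ 2 ≤ (‖Complex.exp (θ * Complex.I) - 1‖) ^ 2 := by
    rw [hsq]
    have : (2 * |θ| / π) ^ 2 = 4 * θ ^ 2 / π ^ 2 := by
      rw [div_pow, mul_pow, sq_abs]; ring_nf
    rw [this]
    have h4 := mul_le_mul_of_nonneg_left hcos (by norm_num : (0:ℝ) ≤ 2)
    have h5 : 4 * θ ^ 2 / π ^ 2 = 2 * (2 * θ ^ 2 / π ^ 2) := by ring
    linarith
  have h3 : (0:ℝ) ≤ 2 * |θ| / π := by positivity
  nlinarith [norm_nonneg (Complex.exp (θ * Complex.I) - 1)]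

end Aux

theorem conjugate_poisson_angular_lipschitz (α : ℝ) (hα : α ∈ Set.Ioo (0 : ℝ) 1) :
    ∃ C > 0, ∀ (g : ℝ → ℝ) (Cg : ℝ),
      (∀ x, g (x + 2 * π) = g x) →
      (∀ x y, |g x - g y| ≤ Cg * |x - y| ^ α) →
      ∀ r φ₁ φ₂ : ℝ, 1 < r →
        |(∫ τ in (-π)..π,
            g (τ + φ₁) * (r * Real.sin τ / (r ^ 2 + 1 - 2 * r * Real.cos τ)))
          - ∫ τ in (-π)..π,
            g (τ + φ₂) * (r * Real.sin τ / (r ^ 2 + 1 - 2 * r * Real.cos τ))|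
          ≤ C * r ^ 2 * Cg * (r - 1) ^ (α - 1)
            * ‖(r : ℂ) * Complex.exp (φ₁ * Complex.I)
                - (r : ℂ) * Complex.exp (φ₂ * Complex.I)‖ := by
  obtain ⟨hα0, hα1⟩ := hα
  have hπ := Real.pi_pos
  set A : ℝ := 2 * (1 / (1 + α) + π ^ 2 / (4 * (1 - α))) with hAdef
  have hApos : 0 < A := by
    have h1 : (0:ℝ) < 1 / (1 + α) := by positivity
    have h2 : (0:ℝ) < π ^ 2 / (4 * (1 - α)) := div_pos (by positivity) (by linarith)
    rw [hAdef]; linarith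
  refine ⟨π * A, by positivity, ?_⟩
  intro g Cg hper hg r φ₁ φ₂ hr
  have hCg : 0 ≤ Cg := holder_Cg_nonneg hg
  have hgc : Continuous g := holder_cont hα0 hg
  have hεr : (0:ℝ) < r - 1 := by linarith
  have hra : (0:ℝ) < (r - 1) ^ (α - 1) := Real.rpow_pos_of_pos hεr _
  -- notation for the function G
  set G : ℝ → ℝ := fun φ => ∫ τ in (-π)..π, g (τ + φ) * Kker r τ with hGdef
  -- reduce φ₂ mod 2π
  set k : ℤ := round ((φ₁ - φ₂) / (2 * π)) with hkdef
  set ψ : ℝ := φ₂ + 2 * π * k with hψdef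
  have hδπ : |φ₁ - ψ| ≤ π := by
    have h1 : |(φ₁ - φ₂) / (2 * π) - k| ≤ 1 / 2 := abs_sub_round _
    have h2 : φ₁ - ψ = 2 * π * ((φ₁ - φ₂) / (2 * π) - k) := by
      rw [hψdef]; field_simp; ring
    rw [h2, abs_mul, abs_of_nonneg (by linarith : (0:ℝ) ≤ 2 * π)]
    calc 2 * π * |(φ₁ - φ₂) / (2 * π) - ↑k| ≤ 2 * π * (1 / 2) :=
          mul_le_mul_of_nonneg_left h1 (by linarith)
      _ = π := by ring
  have hGψ : G ψ = G φ₂ := by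
    rw [hGdef]
    simp only
    apply intervalIntegral.integral_congr
    intro τ _
    show g (τ + ψ) * Kker r τ = g (τ + φ₂) * Kker r τ
    congr 1
    have hpg : Function.Periodic g (2 * π) := hper
    have := (hpg.int_mul k) (τ + φ₂)
    rw [show τ + ψ = τ + φ₂ + ↑k * (2 * π) by rw [hψdef]; ring]
    exact this
  have hexpψ : Complex.exp ((ψ : ℂ) * Complex.I) = Complex.exp ((φ₂ : ℂ) * Complex.I) := by
    have h1 : ((ψ : ℂ)) * Complex.I = (φ₂ : ℂ) * Complex.I + (k : ℂ) * (2 * π * Complex.I) := by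
      rw [hψdef]; push_cast; ring
    rw [h1, Complex.exp_add, Complex.exp_int_mul_two_pi_mul_I, mul_one]
  -- MVT bound
  set M : ℝ := Cg * r ^ 2 * A * (r - 1) ^ (α - 1) with hMdef
  have hM0 : 0 ≤ M := by positivity
  have hmvt : |G φ₁ - G ψ| ≤ M * |φ₁ - ψ| := by
    have := Convex.norm_image_sub_le_of_norm_hasDerivWithin_le (𝕜 := ℝ)
      (f := G) (s := Set.univ)
      (f' := fun φ₀ => ∫ t in (φ₀ - π)..(φ₀ + π), -(g t * Kker' r (t - φ₀)))
      (C := M)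
      (fun x _ => (G_hasDeriv hper hgc hr x).hasDerivWithinAt)
      (fun x _ => by
        rw [Real.norm_eq_abs]
        exact (deriv_bound ⟨hα0, hα1⟩ hg hCg hgc hr x))
      convex_univ (Set.mem_univ ψ) (Set.mem_univ φ₁)
    simpa [Real.norm_eq_abs] using this
  -- lower bound for the chord length
  have hchord : 2 * |φ₁ - ψ| / π
      ≤ ‖Complex.exp ((φ₁ : ℂ) * Complex.I)
          - Complex.exp ((φ₂ : ℂ) * Complex.I)‖ := by
    rw [← hexpψ]
    exact abs_exp_sub_exp_ge hδπ
  set E : ℝ := ‖Complex.exp ((φ₁ : ℂ) * Complex.I)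
      - Complex.exp ((φ₂ : ℂ) * Complex.I)‖ with hEdef
  have hE0 : 0 ≤ E := norm_nonneg _
  have hfactor : ‖(r : ℂ) * Complex.exp (φ₁ * Complex.I)
      - (r : ℂ) * Complex.exp (φ₂ * Complex.I)‖ = r * E := by
    rw [show (r : ℂ) * Complex.exp (φ₁ * Complex.I) - (r : ℂ) * Complex.exp (φ₂ * Complex.I)
        = (r : ℂ) * (Complex.exp ((φ₁ : ℂ) * Complex.I)
            - Complex.exp ((φ₂ : ℂ) * Complex.I)) by ring]
    rw [norm_mul, Complex.norm_real, Real.norm_eq_abs, abs_of_nonneg (by linarith : (0:ℝ) ≤ r), hEdef]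
  -- put everything together
  have hδE : |φ₁ - ψ| ≤ π / 2 * E := by
    have := mul_le_mul_of_nonneg_left hchord (by linarith : (0:ℝ) ≤ π / 2)
    calc |φ₁ - ψ| = π / 2 * (2 * |φ₁ - ψ| / π) := by field_simp
      _ ≤ π / 2 * E := this
  have hGoal : |G φ₁ - G φ₂| ≤ π * A * r ^ 2 * Cg * (r - 1) ^ (α - 1) * (r * E) := by
    rw [← hGψ]
    calc |G φ₁ - G ψ| ≤ M * |φ₁ - ψ| := hmvt
      _ ≤ M * (π / 2 * E) := mul_le_mul_of_nonneg_left hδE hM0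
      _ = (π / 2) * A * r ^ 2 * Cg * (r - 1) ^ (α - 1) * E := by rw [hMdef]; ring
      _ ≤ π * A * r ^ 2 * Cg * (r - 1) ^ (α - 1) * (r * E) := by
          have h1 : (π / 2) * A * r ^ 2 * Cg * (r - 1) ^ (α - 1)
              ≤ π * A * r ^ 2 * Cg * (r - 1) ^ (α - 1) * r := by
            have hbase : (0:ℝ) ≤ A * r ^ 2 * Cg * (r - 1) ^ (α - 1) := by positivity
            nlinarith [mul_nonneg (mul_nonneg hπ.le hbase)
              (by linarith : (0:ℝ) ≤ r - 1 / 2)]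
          calc (π / 2) * A * r ^ 2 * Cg * (r - 1) ^ (α - 1) * E
              ≤ (π * A * r ^ 2 * Cg * (r - 1) ^ (α - 1) * r) * E :=
                mul_le_mul_of_nonneg_right h1 hE0
            _ = π * A * r ^ 2 * Cg * (r - 1) ^ (α - 1) * (r * E) := by ring
  rw [hfactor]
  exact hGoal
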